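/- arXiv:2308.11373 — 3 statements merged into one kernel-verified Lean document; each statement's English description precedes it below -/
import Mathlib

section
/- Correctness of the R-poset product (Theorem 1, language-level form): let P1 = (Ω_1, ⪯_1, ≠_1) and P2 = (Ω_2, ⪯_2, ≠_2) be R-posets and let P = (Ω, ⪯, ≠) be an R-poset together with an injection M : Ω_2 → Ω and an injection M_1 : Ω_1 → Ω such that (a) M_1(ω) ⊨ ω for all ω ∈ Ω_1 and M(ω) ⊨ ω for all ω ∈ Ω_2; (b) ⪯ contains the image of ⪯_1 under M_1 and of ⪯_2 under M; (c) ≠ contains the image of ≠_1 under M_1 and of ≠_2 under M. Then L(P) ⊆ L(P1) ∩ L(P2). -/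
variable {AP : Type*}

/-- A finite word over the alphabet `2^AP` is a list of subsets of `AP`. -/
abbrev Word (AP : Type*) := List (Set AP)

/-- A subtask `ω = (σ_ω, σ^s_ω)`: action labels and self-loop labels. -/
abbrev Subtask (AP : Type*) := Set AP × Set AP

/-- Subtask `ω` is executed at position `j` of word `w`. -/
def ExecAt (w : Word AP) (ω : Subtask AP) (j : ℕ) : Prop :=
  j < w.length ∧ ω.1 ⊆ w.getD j ∅ ∧ ∀ m < j, ω.2 ∩ w.getD m ∅ = ∅

/-- An R-poset `P = (Ω, ⪯, ≠)`. -/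
structure RPoset (AP : Type*) where
  tasks : Set (Subtask AP)
  ord : Set (Subtask AP × Subtask AP)
  neq : Set (Set (Subtask AP))

/-- `π` is a witness assignment of positions showing that `w` satisfies `P`. -/
def IsWitness (w : Word AP) (P : RPoset AP) (π : Subtask AP → ℕ) : Prop :=
  (∀ ω ∈ P.tasks, ExecAt w ω (π ω)) ∧
  (∀ p ∈ P.ord, π p.1 ≤ π p.2) ∧
  (∀ S ∈ P.neq, ¬ ∃ j, ∀ ω ∈ S, π ω = j)

/-- `w ⊨ P`. -/
def Sat (w : Word AP) (P : RPoset AP) : Prop := ∃ π, IsWitness w P π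

/-- The language of an R-poset. -/
def Lang (P : RPoset AP) : Set (Word AP) := {w | Sat w P}

/-- Subtask satisfaction `ω' ⊨ ω`. -/
def SatTask (ω' ω : Subtask AP) : Prop := ω.1 ⊆ ω'.1 ∧ ω.2 ⊆ ω'.2

/-- Theorem 1, correctness of the R-poset product: if the product
R-poset `P` contains, via injections `M1` and `M`, satisfying images of all
subtasks of `P1`, `P2`, of their ordering relations and of their not-equal
constraints, then `L(P) ⊆ L(P1) ∩ L(P2)`. -/
theorem stmt5 (P1 P2 P : RPoset AP)
    (M1 M : Subtask AP → Subtask AP)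
    (hM1inj : Set.InjOn M1 P1.tasks) (hMinj : Set.InjOn M P2.tasks)
    (hM1mem : ∀ ω ∈ P1.tasks, M1 ω ∈ P.tasks)
    (hMmem : ∀ ω ∈ P2.tasks, M ω ∈ P.tasks)
    (hM1sat : ∀ ω ∈ P1.tasks, SatTask (M1 ω) ω)
    (hMsat : ∀ ω ∈ P2.tasks, SatTask (M ω) ω)
    (hord1 : ∀ p ∈ P1.ord, (M1 p.1, M1 p.2) ∈ P.ord)
    (hord2 : ∀ p ∈ P2.ord, (M p.1, M p.2) ∈ P.ord)
    (hneq1 : ∀ S ∈ P1.neq, M1 '' S ∈ P.neq)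
    (hneq2 : ∀ S ∈ P2.neq, M '' S ∈ P.neq) :
    Lang P ⊆ Lang P1 ∩ Lang P2 := by
  intro w hw
  obtain ⟨π, hexec, hord, hneq⟩ := hw
  constructor
  · exact ⟨fun ω => π (M1 ω),
      fun ω hω => by
        obtain ⟨hlen, h1, h2⟩ := hexec _ (hM1mem ω hω)
        obtain ⟨hs1, hs2⟩ := hM1sat ω hω
        exact ⟨hlen, hs1.trans h1, fun m hm => Set.eq_empty_of_subset_empty
          ((Set.inter_subset_inter_left _ hs2).trans (h2 m hm).le)⟩,
      fun p hp => hord _ (hord1 p hp),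
      fun S hS ⟨j, hj⟩ => hneq _ (hneq1 S hS)
        ⟨j, fun ω' ⟨ω, hω, hωe⟩ => hωe ▸ hj ω hω⟩⟩
  · exact ⟨fun ω => π (M ω),
      fun ω hω => by
        obtain ⟨hlen, h1, h2⟩ := hexec _ (hMmem ω hω)
        obtain ⟨hs1, hs2⟩ := hMsat ω hω
        exact ⟨hlen, hs1.trans h1, fun m hm => Set.eq_empty_of_subset_empty
          ((Set.inter_subset_inter_left _ hs2).trans (h2 m hm).le)⟩,
      fun p hp => hord _ (hord2 p hp),
      fun S hS ⟨j, hj⟩ => hneq _ (hneq2 S hS)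
        ⟨j, fun ω' ⟨ω, hω, hωe⟩ => hωe ▸ hj ω hω⟩⟩
end

section
/- The trivial disjoint product of two R-posets with disjoint subtask sets and the union of their constraints has language exactly the intersection of their languages, provided no self-loop label of one conflicts with any action label of the other: if P1 = (Ω_1, ⪯_1, ≠_1) and P2 = (Ω_2, ⪯_2, ≠_2) with Ω_1 ∩ Ω_2 = ∅, and P = (Ω_1 ∪ Ω_2, ⪯_1 ∪ ⪯_2, ≠_1 ∪ ≠_2), then L(P) = L(P1) ∩ L(P2). -/
variable {AP : Type*}

/-- the trivial disjoint product of two R-posets with disjoint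
subtask sets, provided no self-loop label of one conflicts with any action label
of the other, has language exactly the intersection of the two languages. -/
theorem stmt6 (P1 P2 Q : RPoset AP)
    (hdisj : P1.tasks ∩ P2.tasks = ∅)
    (hord1 : ∀ p ∈ P1.ord, p.1 ∈ P1.tasks ∧ p.2 ∈ P1.tasks)
    (hord2 : ∀ p ∈ P2.ord, p.1 ∈ P2.tasks ∧ p.2 ∈ P2.tasks)
    (hneq1 : ∀ S ∈ P1.neq, S ⊆ P1.tasks)
    (hneq2 : ∀ S ∈ P2.neq, S ⊆ P2.tasks)
    (hnoconf : ∀ ω1 ∈ P1.tasks, ∀ ω2 ∈ P2.tasks,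
      ω1.2 ∩ ω2.1 = ∅ ∧ ω2.2 ∩ ω1.1 = ∅)
    (hQ : Q = ⟨P1.tasks ∪ P2.tasks, P1.ord ∪ P2.ord, P1.neq ∪ P2.neq⟩) :
    Lang Q = Lang P1 ∩ Lang P2 := by
  subst hQ
  ext w
  constructor
  · rintro ⟨π, h1, h2, h3⟩
    exact ⟨⟨π, fun ω hω => h1 ω (Or.inl hω), fun p hp => h2 p (Or.inl hp),
            fun S hS => h3 S (Or.inl hS)⟩,
           ⟨π, fun ω hω => h1 ω (Or.inr hω), fun p hp => h2 p (Or.inr hp),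
            fun S hS => h3 S (Or.inr hS)⟩⟩
  · rintro ⟨⟨π1, h11, h12, h13⟩, ⟨π2, h21, h22, h23⟩⟩
    classical
    refine ⟨fun ω => if ω ∈ P1.tasks then π1 ω else π2 ω, ?_, ?_, ?_⟩
    · rintro ω (hω | hω)
      · simpa [hω] using h11 ω hω
      · have : ω ∉ P1.tasks := fun h => Set.eq_empty_iff_forall_notMem.mp hdisj ω ⟨h, hω⟩
        simpa [this] using h21 ω hω
    · rintro p (hp | hp)
      · obtain ⟨ha, hb⟩ := hord1 p hp
        simpa [ha, hb] using h12 p hp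
      · obtain ⟨ha, hb⟩ := hord2 p hp
        have ha' : p.1 ∉ P1.tasks := fun h => Set.eq_empty_iff_forall_notMem.mp hdisj _ ⟨h, ha⟩
        have hb' : p.2 ∉ P1.tasks := fun h => Set.eq_empty_iff_forall_notMem.mp hdisj _ ⟨h, hb⟩
        simpa [ha', hb'] using h22 p hp
    · rintro S (hS | hS)
      · intro ⟨j, hj⟩
        exact h13 S hS ⟨j, fun ω hω => by
          have := hj ω hω; simpa [hneq1 S hS hω] using this⟩
      · intro ⟨j, hj⟩
        refine h23 S hS ⟨j, fun ω hω => ?_⟩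
        have h2 := hneq2 S hS hω
        have h1 : ω ∉ P1.tasks := fun h => Set.eq_empty_iff_forall_notMem.mp hdisj ω ⟨h, h2⟩
        simpa [h1] using hj ω hω
end

section
/- Online product finished-subtask soundness: let P1 = (Ω_1, ⪯_1, ≠_1) and let w_0 be a finite word with a partial witness assignment π₀ covering a subset Ω_f ⊆ Ω_1 of 'finished' subtasks (each ω ∈ Ω_f is executed at position π₀(ω) in w_0 and all ⪯_1-predecessors of Ω_f elements are in Ω_f). If w is a finite word such that the concatenation w_0·w satisfies the restricted R-poset P1' = (Ω_1 \ Ω_f, ⪯_1 restricted, ≠_1 restricted) using only positions beyond |w_0| for the unfinished subtasks, and additionally for every ω ∈ Ω_1 \ Ω_f the self-loop labels σ^s_ω do not appear in w_0, then w_0·w satisfies P1. -/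
variable {AP : Type*}

/-- online product finished-subtask soundness: if `π₀` is a
partial witness on the finished, downward-closed set `Ω_f ⊆ Ω_1` over `w_0`,
and `w_0·w` satisfies the restriction of `P1` to the unfinished subtasks using
only positions beyond `|w_0|`, while no unfinished self-loop label occurs in
`w_0`, then `w_0·w` satisfies `P1`. -/
theorem stmt14 (P1 : RPoset AP) (Ωf : Set (Subtask AP)) (w0 w : Word AP)
    (π0 : Subtask AP → ℕ)
    (hfsub : Ωf ⊆ P1.tasks)
    (hordmem : ∀ p ∈ P1.ord, p.1 ∈ P1.tasks ∧ p.2 ∈ P1.tasks)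
    (hneqmem : ∀ S ∈ P1.neq, S ⊆ P1.tasks)
    -- π₀ is a partial witness on the finished subtasks over w₀:
    (h0exec : ∀ ω ∈ Ωf, ExecAt w0 ω (π0 ω))
    (h0ord : ∀ p ∈ P1.ord, p.1 ∈ Ωf → p.2 ∈ Ωf → π0 p.1 ≤ π0 p.2)
    (h0neq : ∀ S ∈ P1.neq, S ⊆ Ωf → ¬ ∃ j, ∀ ω ∈ S, π0 ω = j)
    -- all ⪯₁-predecessors of finished subtasks are finished:
    (hdown : ∀ p ∈ P1.ord, p.2 ∈ Ωf → p.1 ∈ Ωf)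
    -- w₀·w satisfies the restricted R-poset with positions beyond |w₀|:
    (hrest : ∃ π : Subtask AP → ℕ,
      (∀ ω ∈ P1.tasks \ Ωf, w0.length ≤ π ω ∧ ExecAt (w0 ++ w) ω (π ω)) ∧
      (∀ p ∈ P1.ord, p.1 ∈ P1.tasks \ Ωf → p.2 ∈ P1.tasks \ Ωf →
        π p.1 ≤ π p.2) ∧
      (∀ S ∈ P1.neq, S ⊆ P1.tasks \ Ωf → ¬ ∃ j, ∀ ω ∈ S, π ω = j))
    -- self-loop labels of unfinished subtasks do not appear in w₀:
    (hself : ∀ ω ∈ P1.tasks \ Ωf, ∀ m < w0.length, ω.2 ∩ w0.getD m ∅ = ∅) :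
    Sat (w0 ++ w) P1 := by

  obtain ⟨π, hπexec, hπord, hπneq⟩ := hrest
  classical
  refine ⟨fun ω => if ω ∈ Ωf then π0 ω else π ω, ?_, ?_, ?_⟩
  · intro ω hω
    by_cases hf : ω ∈ Ωf
    · simp only [hf, if_pos]
      obtain ⟨hlt, hsub, hsl⟩ := h0exec ω hf
      refine ⟨?_, ?_, ?_⟩
      · rw [List.length_append]; omega
      · rwa [List.getD_append _ _ _ _ hlt]
      · intro m hm
        rw [List.getD_append _ _ _ _ (hm.trans hlt)]
        exact hsl m hm
    · simp only [hf, if_neg, not_false_iff]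
      exact (hπexec ω ⟨hω, hf⟩).2
  · intro p hp
    obtain ⟨h1, h2⟩ := hordmem p hp
    by_cases hf2 : p.2 ∈ Ωf
    · have hf1 : p.1 ∈ Ωf := hdown p hp hf2
      simp only [hf1, hf2, if_pos]
      exact h0ord p hp hf1 hf2
    · by_cases hf1 : p.1 ∈ Ωf
      · simp only [hf1, hf2, if_pos, if_neg, not_false_iff]
        exact le_trans (Nat.le_of_lt (h0exec p.1 hf1).1) (hπexec p.2 ⟨h2, hf2⟩).1
      · simp only [hf1, hf2, if_neg, not_false_iff]
        exact hπord p hp ⟨h1, hf1⟩ ⟨h2, hf2⟩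
  · intro S hS ⟨j, hj⟩
    by_cases hall : S ⊆ Ωf
    · exact h0neq S hS hall ⟨j, fun ω hω => by
        have := hj ω hω; simpa [hall hω] using this⟩
    · by_cases hnone : S ⊆ P1.tasks \ Ωf
      · exact hπneq S hS hnone ⟨j, fun ω hω => by
          have := hj ω hω; simpa [(hnone hω).2] using this⟩
      · obtain ⟨ω2, hω2S, hω2⟩ := Set.not_subset.mp hall
        have hω2' : ω2 ∈ P1.tasks \ Ωf := ⟨hneqmem S hS hω2S, hω2⟩
        obtain ⟨ω1, hω1S, hω1⟩ : ∃ ω1 ∈ S, ω1 ∈ Ωf := by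
          by_contra h
          push_neg at h
          exact hnone fun ω hω => ⟨hneqmem S hS hω, h ω hω⟩
        have e1 := hj ω1 hω1S
        have e2 := hj ω2 hω2S
        simp only [hω1, if_true] at e1
        simp only [hω2, if_false] at e2
        have : π0 ω1 < π ω2 := lt_of_lt_of_le (h0exec ω1 hω1).1 (hπexec ω2 hω2').1
        omega
end
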